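/- For every realization of the random signs, the SPS confidence region satisfies the inclusion Θ̂ₙ ⊆ {θ ∈ ℝ^d : (θ − θ̂ₙ)ᵀ Rₙ (θ − θ̂ₙ) ≤ r(θ)}, where r(θ) denotes the q-th largest value among ‖S₁(θ)‖², ..., ‖S_{m−1}(θ)‖². -/

import Mathlib

open Matrix

noncomputable section

/-- Squared Euclidean norm of a vector in `ℝ^d`. -/
def spsNormSq {d : ℕ} (v : Fin d → ℝ) : ℝ := ∑ j, v j ^ 2

/-- The strict total order `≻_π`. -/
def SuccPi {m : ℕ} (σ : Equiv.Perm (Fin m)) (z : Fin m → ℝ) (k j : Fin m) : Prop :=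
  z j < z k ∨ (z k = z j ∧ σ j < σ k)

/-- The (sign-perturbed) sums `S_i(θ)`. -/
def spsS {d n m : ℕ} (φ : Fin n → Fin d → ℝ) (Rhalf : Matrix (Fin d) (Fin d) ℝ)
    (Y : Fin n → ℝ) (a : Fin m → Fin n → ℝ) (i : Fin m) (θ : Fin d → ℝ) : Fin d → ℝ :=
  Rhalf⁻¹ *ᵥ ((n : ℝ)⁻¹ • ∑ t, (a i t * (Y t - φ t ⬝ᵥ θ)) • φ t)

/-- The rank `𝓡(θ)`. -/
def spsRank {d n m : ℕ} [NeZero m] (φ : Fin n → Fin d → ℝ)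
    (Rhalf : Matrix (Fin d) (Fin d) ℝ) (Y : Fin n → ℝ) (a : Fin m → Fin n → ℝ)
    (σ : Equiv.Perm (Fin m)) (θ : Fin d → ℝ) : ℕ :=
  1 + Set.ncard {i : Fin m | i ≠ 0 ∧
      SuccPi σ (fun j => spsNormSq (spsS φ Rhalf Y a j θ)) 0 i}

/-- The SPS confidence region `Θ̂ₙ`. -/
def spsRegion {d n m : ℕ} [NeZero m] (φ : Fin n → Fin d → ℝ)
    (Rhalf : Matrix (Fin d) (Fin d) ℝ) (Y : Fin n → ℝ) (a : Fin m → Fin n → ℝ)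
    (σ : Equiv.Perm (Fin m)) (q : ℕ) : Set (Fin d → ℝ) :=
  {θ | spsRank φ Rhalf Y a σ θ ≤ m - q}

/-- The `q`-th largest element of a multiset of reals (counted with multiplicity). -/
def qthLargest (s : Multiset ℝ) (q : ℕ) : ℝ :=
  (s.sort (· ≤ ·)).getD (Multiset.card s - q) 0

lemma le_getD_of_countP (l : List ℝ) (hl : l.Pairwise (· ≤ ·)) (z0 : ℝ) (q : ℕ)
    (hq : 0 < q) (hql : q ≤ l.length)
    (hc : q ≤ l.countP (fun x => decide (z0 ≤ x))) :
    z0 ≤ l.getD (l.length - q) 0 := by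
  by_contra h
  push_neg at h
  set k := l.length - q + 1 with hk
  have hkle : k ≤ l.length := by omega
  have hidx : l.length - q < l.length := by omega
  have hgetD : l.getD (l.length - q) 0 = l.get ⟨l.length - q, hidx⟩ := by
    simp [List.getD_eq_getElem?_getD, List.getElem?_eq_getElem hidx]
  have htake : ∀ x ∈ l.take k, ¬ (z0 ≤ x) := by
    intro x hx
    rw [List.mem_take_iff_getElem] at hx
    obtain ⟨i, hi, rfl⟩ := hx
    have hi' : i < l.length := lt_of_lt_of_le (lt_min_iff.mp hi).1 hkle
    have hile : i ≤ l.length - q := by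
      have := (lt_min_iff.mp hi).1; omega
    have := hl.rel_get_of_le (a := ⟨i, hi'⟩) (b := ⟨l.length - q, hidx⟩) hile
    rw [hgetD] at h
    push_neg
    calc l[i] = l.get ⟨i, hi'⟩ := rfl
      _ ≤ l.get ⟨l.length - q, hidx⟩ := this
      _ < z0 := h
  have hsplit : l.countP (fun x => decide (z0 ≤ x)) =
      (l.take k).countP (fun x => decide (z0 ≤ x)) +
      (l.drop k).countP (fun x => decide (z0 ≤ x)) := by
    conv_lhs => rw [← List.take_append_drop k l]
    rw [List.countP_append]
  have h1 : (l.take k).countP (fun x => decide (z0 ≤ x)) = 0 := by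
    rw [List.countP_eq_zero]
    intro x hx
    simpa using htake x hx
  have h2 : (l.drop k).countP (fun x => decide (z0 ≤ x)) ≤ (l.drop k).length :=
    List.countP_le_length
  rw [List.length_drop] at h2
  omega

/-- The SPS region is contained in `{θ : (θ−θ̂ₙ)ᵀ Rₙ (θ−θ̂ₙ) ≤ r(θ)}`, where `r(θ)` is
the `q`-th largest of the values `‖S₁(θ)‖², …, ‖S_{m−1}(θ)‖²`. -/
theorem sps_region_subset_qth_largest
    (d n m q : ℕ) [NeZero m] (hn : 0 < n) (hq : 0 < q) (hqm : q < m)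
    (φ : Fin n → Fin d → ℝ) (Y : Fin n → ℝ)
    (Rn : Matrix (Fin d) (Fin d) ℝ)
    (hRn : Rn = (n : ℝ)⁻¹ • ∑ t, vecMulVec (φ t) (φ t))
    (hPD : Rn.PosDef)
    (Rhalf : Matrix (Fin d) (Fin d) ℝ)
    (hRhalfInv : IsUnit Rhalf.det)
    (hfact : Rhalf * Rhalfᵀ = Rn)
    (θhat : Fin d → ℝ)
    (hθhat : θhat = (∑ t, vecMulVec (φ t) (φ t))⁻¹ *ᵥ ∑ t, Y t • φ t)
    (a : Fin m → Fin n → ℝ)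
    (ha0 : ∀ t, a 0 t = 1)
    (ha : ∀ i t, a i t = 1 ∨ a i t = -1)
    (π : Equiv.Perm (Fin m)) :
    spsRegion φ Rhalf Y a π q ⊆
      {θ : Fin d → ℝ | (θ - θhat) ⬝ᵥ (Rn *ᵥ (θ - θhat)) ≤
        qthLargest ((Finset.univ.filter (fun i : Fin m => i ≠ 0)).val.map
          (fun i => spsNormSq (spsS φ Rhalf Y a i θ))) q} := by
  classical
  intro θ hθ
  simp only [spsRegion, Set.mem_setOf_eq, spsRank] at hθ
  set z : Fin m → ℝ := fun i => spsNormSq (spsS φ Rhalf Y a i θ) with hzdef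
  -- Step A: algebra
  have hnne : (n : ℝ) ≠ 0 := Nat.cast_ne_zero.mpr hn.ne'
  have hM : (∑ t, vecMulVec (φ t) (φ t)) = (n : ℝ) • Rn := by
    rw [hRn, smul_smul, mul_inv_cancel₀ hnne, one_smul]
  have hMdet : IsUnit (∑ t, vecMulVec (φ t) (φ t)).det := by
    rw [hM, det_smul]
    exact (isUnit_iff_ne_zero).2 (mul_ne_zero (pow_ne_zero _ hnne) hPD.det_pos.ne')
  have hRnhat : Rn *ᵥ θhat = (n : ℝ)⁻¹ • ∑ t, Y t • φ t := by
    rw [hθhat, hRn, smul_mulVec, mulVec_mulVec,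
      mul_nonsing_inv _ hMdet, one_mulVec]
  have hRnθ : Rn *ᵥ θ = (n : ℝ)⁻¹ • ∑ t, (φ t ⬝ᵥ θ) • φ t := by
    rw [hRn, smul_mulVec]
    congr 1
    ext j
    simp only [mulVec, dotProduct, Matrix.sum_apply, vecMulVec_apply, Finset.sum_apply,
      Pi.smul_apply, smul_eq_mul, Finset.sum_mul]
    rw [Finset.sum_comm]
    exact Finset.sum_congr rfl fun t _ => Finset.sum_congr rfl fun k _ => by ring
  have hsum : (n : ℝ)⁻¹ • ∑ t, (Y t - φ t ⬝ᵥ θ) • φ t = Rn *ᵥ (θhat - θ) := by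
    rw [mulVec_sub, hRnhat, hRnθ, ← smul_sub, ← Finset.sum_sub_distrib]
    congr 1
    congr 1
    ext t
    rw [sub_smul]
  have hS0 : spsS φ Rhalf Y a 0 θ = Rhalfᵀ *ᵥ (θhat - θ) := by
    unfold spsS
    simp only [ha0, one_mul]
    rw [hsum, mulVec_mulVec, ← hfact, ← mul_assoc, nonsing_inv_mul _ hRhalfInv, one_mul]
  have hnormsq : ∀ v : Fin d → ℝ, spsNormSq v = v ⬝ᵥ v := by
    intro v; simp [spsNormSq, dotProduct, sq]
  have hz0 : z 0 = (θ - θhat) ⬝ᵥ (Rn *ᵥ (θ - θhat)) := by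
    have h1 : (Rhalfᵀ *ᵥ (θhat - θ)) ⬝ᵥ (Rhalfᵀ *ᵥ (θhat - θ))
        = (θhat - θ) ⬝ᵥ ((Rhalf * Rhalfᵀ) *ᵥ (θhat - θ)) := by
      rw [← mulVec_mulVec, dotProduct_mulVec _ Rhalf, ← mulVec_transpose]
    have h2 : (θ - θhat) = -(θhat - θ) := by ring
    rw [hzdef]
    simp only [hnormsq, hS0, h1, hfact, h2, mulVec_neg, neg_dotProduct, dotProduct_neg, neg_neg]
  -- Step B: counting
  set A := Finset.univ.filter (fun i : Fin m => i ≠ 0 ∧ SuccPi π z 0 i) with hA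
  set B := Finset.univ.filter (fun i : Fin m => i ≠ 0 ∧ z 0 ≤ z i) with hB
  have hsetA : {i : Fin m | i ≠ 0 ∧ SuccPi π z 0 i} = ↑A := by
    ext i; simp [hA]
  rw [hsetA, Set.ncard_coe_finset] at hθ
  have hne : (Finset.univ.filter (fun i : Fin m => i ≠ 0)).card = m - 1 := by
    rw [Finset.filter_ne' Finset.univ 0, Finset.card_erase_of_mem (Finset.mem_univ 0),
      Finset.card_univ, Fintype.card_fin]
  have hBsub : (Finset.univ.filter (fun i : Fin m => i ≠ 0)) \ A ⊆ B := by
    intro i hi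
    rw [Finset.mem_sdiff] at hi
    obtain ⟨hi1, hi2⟩ := hi
    rw [Finset.mem_filter] at hi1 ⊢
    refine ⟨Finset.mem_univ _, hi1.2, ?_⟩
    by_contra hlt
    push_neg at hlt
    exact hi2 (Finset.mem_filter.2 ⟨Finset.mem_univ _, hi1.2, Or.inl hlt⟩)
  have hAsub : A ⊆ Finset.univ.filter (fun i : Fin m => i ≠ 0) := by
    intro i hi
    rw [Finset.mem_filter] at hi ⊢
    exact ⟨hi.1, hi.2.1⟩
  have hBcard : q ≤ B.card := by
    have := Finset.card_le_card hBsub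
    rw [Finset.card_sdiff_of_subset hAsub, hne] at this
    have hAc := Finset.card_le_card hAsub
    omega
  -- Step C: multiset
  set s : Multiset ℝ := (Finset.univ.filter (fun i : Fin m => i ≠ 0)).val.map z with hs
  have hcards : Multiset.card s = m - 1 := by
    rw [hs, Multiset.card_map]
    exact hne
  set l := s.sort (· ≤ ·) with hl
  have hlen : l.length = m - 1 := by rw [hl, Multiset.length_sort, hcards]
  have hcount : q ≤ l.countP (fun x => decide (z 0 ≤ x)) := by
    have h1 : Multiset.countP (fun x => z 0 ≤ x) s = B.card := by
      rw [hs, Multiset.countP_map]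
      rw [hB]
      rw [← Finset.filter_filter]
      rfl
    have h2 : Multiset.countP (fun x => z 0 ≤ x) s = l.countP (fun x => decide (z 0 ≤ x)) := by
      conv_lhs => rw [← Multiset.sort_eq s (· ≤ ·)]
      rfl
    omega
  have hfin : z 0 ≤ l.getD (l.length - q) 0 :=
    le_getD_of_countP l (s.pairwise_sort _) (z 0) q hq (by omega) hcount
  rw [Set.mem_setOf_eq, ← hz0]
  unfold qthLargest
  rw [← hs, ← hl, hcards, ← hlen]
  exact hfin


end
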